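/- Define f(t) = −2(3t²u²(t) − 2v(t) + t)/(t + v(t))² for t ∈ (0,∞), with u(t) = (t-1)/(t·log t) and v(t) = ∫₀ᵗ τu²(τ) dτ. Then f(t) → +∞ as t → 0⁺. -/

import Mathlib

open Real MeasureTheory Filter Set Topology

/-- u(t) = (t-1)/(t·log t) with the removable singularity u(1) = 1. -/
noncomputable def u (t : ℝ) : ℝ := if t = 1 then 1 else (t - 1) / (t * Real.log t)

/-- v(t) = ∫₀ᵗ τ·u(τ)² dτ. -/
noncomputable def v (t : ℝ) : ℝ := ∫ τ in Set.Ioo (0:ℝ) t, τ * u τ ^ 2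

/-- f(t) = −2(3t²u²(t) − 2v(t) + t)/(t + v(t))². -/
noncomputable def f (t : ℝ) : ℝ :=
  -2 * (3 * t ^ 2 * u t ^ 2 - 2 * v t + t) / (t + v t) ^ 2

lemma sq_le_exp (x : ℝ) (hx : 0 ≤ x) : x ^ 2 ≤ Real.exp x := by
  have h := Real.add_one_le_exp (x / 4)
  have h2 : Real.exp x = (Real.exp (x / 4)) ^ 4 := by
    rw [← Real.exp_nat_mul]; ring_nf
  have h5 : (x / 4 + 1) ^ 4 ≤ (Real.exp (x / 4)) ^ 4 :=
    pow_le_pow_left₀ (by linarith) h 4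
  nlinarith [sq_nonneg (x / 4 - 1), sq_nonneg (x/4+1)]

lemma t_log_sq_le_one {t : ℝ} (h0 : 0 < t) (h1 : t < 1) : t * Real.log t ^ 2 ≤ 1 := by
  have hy : Real.log t ≤ 0 := Real.log_nonpos h0.le h1.le
  have h2 : (-Real.log t) ^ 2 ≤ Real.exp (-Real.log t) := sq_le_exp _ (by linarith)
  have h3 : Real.exp (Real.log t) = t := Real.exp_log h0
  have h4 : Real.exp (Real.log t) * Real.exp (-Real.log t) = 1 := by
    rw [← Real.exp_add]; simp
  nlinarith [Real.exp_pos (-Real.log t)]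

lemma hasDerivAt_g {τ : ℝ} (h0 : 0 < τ) (h1 : τ ≠ 1) :
    HasDerivAt (fun x => -(Real.log x)⁻¹) ((τ * Real.log τ ^ 2)⁻¹) τ := by
  have hlog : Real.log τ ≠ 0 := Real.log_ne_zero_of_pos_of_ne_one h0 h1
  have h := ((Real.hasDerivAt_log h0.ne').inv hlog).neg
  have e : (τ * Real.log τ ^ 2)⁻¹ = -(-τ⁻¹ / Real.log τ ^ 2) := by
    rw [neg_div, neg_neg, div_eq_mul_inv, mul_inv]
  rw [e]; exact h

lemma h_contOn {a b : ℝ} (ha : 0 < a) (hb : b < 1) :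
    ContinuousOn (fun x => (x * Real.log x ^ 2)⁻¹) (Set.Icc a b) := by
  apply ContinuousOn.inv₀
  · refine continuousOn_id.mul ((Real.continuousOn_log.mono ?_).pow 2)
    intro x hx h
    simp only [mem_singleton_iff] at h
    exact absurd hx.1 (by rw [h]; exact not_le.mpr ha)
  · intro x hx
    have hx0 : 0 < x := lt_of_lt_of_le ha hx.1
    have hx1 : x < 1 := lt_of_le_of_lt hx.2 hb
    have : Real.log x ≠ 0 := Real.log_ne_zero_of_pos_of_ne_one hx0 hx1.ne
    positivity

lemma integral_h {a t : ℝ} (ha : 0 < a) (hat : a ≤ t) (ht : t < 1) :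
    ∫ x in a..t, (x * Real.log x ^ 2)⁻¹ = -(Real.log t)⁻¹ - -(Real.log a)⁻¹ := by
  apply intervalIntegral.integral_eq_sub_of_hasDerivAt
  · intro x hx
    rw [Set.uIcc_of_le hat] at hx
    exact hasDerivAt_g (lt_of_lt_of_le ha hx.1) (ne_of_lt (lt_of_le_of_lt hx.2 ht))
  · exact (h_contOn ha ht).intervalIntegrable_of_Icc hat

lemma g_nonneg {x : ℝ} (h0 : 0 < x) (h1 : x < 1) : 0 ≤ -(Real.log x)⁻¹ := by
  have : Real.log x < 0 := Real.log_neg h0 h1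
  simp only [neg_nonneg]
  exact (inv_nonpos).mpr this.le

lemma h_nonneg {x : ℝ} (h0 : 0 < x) : 0 ≤ (x * Real.log x ^ 2)⁻¹ := by positivity

lemma improper_h {t : ℝ} (h0 : 0 < t) (h1 : t < 1) :
    IntegrableOn (fun x => (x * Real.log x ^ 2)⁻¹) (Set.Ioc 0 t) ∧
      ∫ x in Set.Ioc (0:ℝ) t, (x * Real.log x ^ 2)⁻¹ = -(Real.log t)⁻¹ := by
  set h : ℝ → ℝ := fun x => (x * Real.log x ^ 2)⁻¹ with hh
  set a : ℕ → ℝ := fun n => t / (n + 2) with haf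
  have ha_pos : ∀ n, 0 < a n := fun n => by positivity
  have ha_le : ∀ n, a n ≤ t := fun n => by
    rw [haf]; rw [div_le_iff₀ (by positivity)]
    nlinarith [Nat.cast_nonneg (α := ℝ) n]
  have ha_anti : Antitone a := fun m n hmn => by
    apply div_le_div_of_nonneg_left h0.le (by positivity)
    have : (m:ℝ) ≤ n := Nat.cast_le.mpr hmn
    linarith
  have ha_tendsto : Tendsto a atTop (𝓝 0) := by
    have := (tendsto_const_div_atTop_nhds_zero_nat t).comp (tendsto_add_atTop_nat 2)
    refine Tendsto.congr (fun n => ?_) this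
    simp [Function.comp, haf]
  have hfi : ∀ n, IntegrableOn h (Set.Ioc (a n) t) := fun n =>
    ((h_contOn (ha_pos n) h1).integrableOn_Icc).mono_set Set.Ioc_subset_Icc_self
  have hval : ∀ n, ∫ x in Set.Ioc (a n) t, h x = -(Real.log t)⁻¹ - -(Real.log (a n))⁻¹ := by
    intro n
    rw [← intervalIntegral.integral_of_le (ha_le n)]
    exact integral_h (ha_pos n) (ha_le n) h1
  have hbound : ∀ n, (∫ x in Set.Ioc (a n) t, ‖h x‖) ≤ -(Real.log t)⁻¹ := by
    intro n
    have : ∀ x ∈ Set.Ioc (a n) t, ‖h x‖ = h x := fun x hx =>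
      Real.norm_of_nonneg (h_nonneg (lt_of_lt_of_le (ha_pos n) hx.1.le))
    rw [setIntegral_congr_fun measurableSet_Ioc this, hval n]
    have := g_nonneg (ha_pos n) (lt_of_le_of_lt (ha_le n) h1)
    linarith
  have hint : IntegrableOn h (Set.Ioc 0 t) :=
    integrableOn_Ioc_of_intervalIntegral_norm_bounded_left hfi ha_tendsto
      (Eventually.of_forall hbound)
  refine ⟨hint, ?_⟩
  have hunion : (⋃ n, Set.Ioc (a n) t) = Set.Ioc 0 t := by
    ext x
    simp only [Set.mem_iUnion, Set.mem_Ioc]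
    constructor
    · rintro ⟨n, hx1, hx2⟩; exact ⟨lt_trans (ha_pos n) hx1, hx2⟩
    · rintro ⟨hx1, hx2⟩
      obtain ⟨n, hn⟩ := ((ha_tendsto.eventually (eventually_lt_nhds hx1)).and
        (Eventually.of_forall fun _ => trivial)).exists
      exact ⟨n, hn.1, hx2⟩
  have hmono : Monotone fun n => Set.Ioc (a n) t := fun m n hmn =>
    Set.Ioc_subset_Ioc_left (ha_anti hmn)
  have h_tendsto1 := tendsto_setIntegral_of_monotone (fun n => measurableSet_Ioc) hmono
    (hunion ▸ hint)
  rw [hunion] at h_tendsto1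
  have h_tendsto2 : Tendsto (fun n => ∫ x in Set.Ioc (a n) t, h x) atTop
      (𝓝 (-(Real.log t)⁻¹)) := by
    simp_rw [hval]
    have hlog : Tendsto (fun n => Real.log (a n)) atTop atBot := by
      apply Real.tendsto_log_nhdsGT_zero.comp
      exact tendsto_nhdsWithin_of_tendsto_nhds_of_eventually_within _ ha_tendsto
        (Eventually.of_forall fun n => ha_pos n)
    have h2 : Tendsto (fun n => -Real.log (a n)) atTop atTop :=
      tendsto_neg_atBot_iff.mp (by simpa using hlog)
    have : Tendsto (fun n => -(Real.log (a n))⁻¹) atTop (𝓝 0) := by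
      have h3 := h2.inv_tendsto_atTop
      simp only [Pi.inv_def] at h3
      simpa [inv_neg] using h3
    simpa using tendsto_const_nhds.sub this
  exact tendsto_nhds_unique h_tendsto1 h_tendsto2

lemma u_measurable : Measurable u := by
  unfold u
  refine Measurable.ite (measurableSet_eq) measurable_const ?_
  exact (measurable_id.sub measurable_const).div (measurable_id.mul Real.measurable_log)

lemma u_sq {τ : ℝ} (h0 : 0 < τ) (h1 : τ < 1) :
    τ * u τ ^ 2 = (τ - 1) ^ 2 * (τ * Real.log τ ^ 2)⁻¹ := by
  rw [u, if_neg h1.ne]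
  have hlog : Real.log τ ≠ 0 := Real.log_ne_zero_of_pos_of_ne_one h0 h1.ne
  field_simp

lemma tu_integrable {t : ℝ} (h0 : 0 < t) (h1 : t < 1) :
    IntegrableOn (fun τ => τ * u τ ^ 2) (Set.Ioo 0 t) := by
  have hint := (improper_h h0 h1).1.mono_set Set.Ioo_subset_Ioc_self
  refine hint.integrable.mono ?_ ?_
  · exact ((measurable_id.mul ((u_measurable).pow_const 2)).aestronglyMeasurable)
  · rw [ae_restrict_iff' measurableSet_Ioo]
    refine Eventually.of_forall fun τ hτ => ?_
    have hτ0 : 0 < τ := hτ.1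
    have hτ1 : τ < 1 := lt_trans hτ.2 h1
    rw [u_sq hτ0 hτ1]
    rw [Real.norm_of_nonneg (by positivity), Real.norm_of_nonneg (h_nonneg hτ0)]
    have h2 : (τ - 1) ^ 2 ≤ 1 := by nlinarith
    nlinarith [h_nonneg hτ0]

lemma v_bounds {t : ℝ} (h0 : 0 < t) (h1 : t ≤ 1/2) :
    -(Real.log t)⁻¹ / 4 ≤ v t ∧ v t ≤ -(Real.log t)⁻¹ := by
  have ht1 : t < 1 := lt_of_le_of_lt h1 (by norm_num)
  obtain ⟨hint, hval⟩ := improper_h h0 ht1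
  have hIoo : IntegrableOn (fun x => (x * Real.log x ^ 2)⁻¹) (Set.Ioo 0 t) :=
    hint.mono_set Set.Ioo_subset_Ioc_self
  have hvalo : ∫ x in Set.Ioo (0:ℝ) t, (x * Real.log x ^ 2)⁻¹ = -(Real.log t)⁻¹ := by
    rw [← integral_Ioc_eq_integral_Ioo]; exact hval
  have htu := tu_integrable h0 ht1
  constructor
  · have hlow : ∀ τ ∈ Set.Ioo (0:ℝ) t,
        (1/4) * (τ * Real.log τ ^ 2)⁻¹ ≤ τ * u τ ^ 2 := by
      intro τ hτ
      rw [u_sq hτ.1 (lt_trans hτ.2 ht1)]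
      have h2 : (1:ℝ)/4 ≤ (τ - 1) ^ 2 := by nlinarith [hτ.2, hτ.1, h1]
      nlinarith [h_nonneg hτ.1]
    have := setIntegral_mono_on (hIoo.const_mul (1/4)) htu measurableSet_Ioo hlow
    rw [integral_const_mul, hvalo] at this
    unfold v
    linarith
  · have hup : ∀ τ ∈ Set.Ioo (0:ℝ) t,
        τ * u τ ^ 2 ≤ (τ * Real.log τ ^ 2)⁻¹ := by
      intro τ hτ
      rw [u_sq hτ.1 (lt_trans hτ.2 ht1)]
      have h2 : (τ - 1) ^ 2 ≤ 1 := by nlinarith [hτ.1, hτ.2]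
      nlinarith [h_nonneg hτ.1]
    have := setIntegral_mono_on htu hIoo measurableSet_Ioo hup
    rw [hvalo] at this
    unfold v
    linarith

lemma f_lower {t : ℝ} (h0 : 0 < t) (ht : t ≤ Real.exp (-8)) :
    -Real.log t / 4 - 2 ≤ f t := by
  have hexp : Real.exp (-8) ≤ 1/2 := by
    rw [show (1:ℝ)/2 = (2:ℝ)⁻¹ by norm_num]
    rw [Real.exp_neg]
    apply inv_anti₀ (by norm_num)
    calc (2:ℝ) ≤ 1 + 8 := by norm_num
    _ ≤ Real.exp 8 := by linarith [Real.add_one_le_exp (8:ℝ)]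
  have h12 : t ≤ 1/2 := le_trans ht hexp
  have ht1 : t < 1 := lt_of_le_of_lt h12 (by norm_num)
  have hlogt : Real.log t ≤ -8 := by
    calc Real.log t ≤ Real.log (Real.exp (-8)) := Real.log_le_log h0 ht
    _ = -8 := Real.log_exp _
  set L : ℝ := -(Real.log t)⁻¹ with hL
  clear_value L
  have hlneg : Real.log t < 0 := by linarith
  have hL0 : 0 < L := by
    rw [hL]
    have := inv_lt_zero.mpr hlneg
    linarith
  have hL8 : L ≤ 1/8 := by
    rw [hL, neg_inv]
    rw [inv_le_comm₀ (by linarith) (by norm_num)]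
    linarith
  obtain ⟨hvge, hvle⟩ := v_bounds h0 h12
  rw [← hL] at hvge hvle
  have hv0 : 0 < v t := by linarith
  have hu2 : t ^ 2 * u t ^ 2 ≤ L ^ 2 := by
    rw [u, if_neg ht1.ne]
    have hlog : Real.log t ≠ 0 := hlneg.ne
    have key : t ^ 2 * ((t - 1) / (t * Real.log t)) ^ 2 = (t-1)^2 * ((Real.log t)⁻¹)^2 := by
      field_simp
    rw [key]
    have h2 : (t - 1) ^ 2 ≤ 1 := by nlinarith
    have hL2 : L ^ 2 = ((Real.log t)⁻¹)^2 := by rw [hL]; ring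
    nlinarith [sq_nonneg ((Real.log t)⁻¹)]
  have htL : t ≤ L ^ 2 := by
    have h2 := t_log_sq_le_one h0 ht1
    have hsq : 0 < Real.log t ^ 2 := by
      have := mul_pos (neg_pos.mpr hlneg) (neg_pos.mpr hlneg)
      nlinarith
    have hL2 : L ^ 2 = (Real.log t ^ 2)⁻¹ := by
      rw [hL]
      rw [← inv_pow]
      ring_nf
    have hc : Real.log t ^ 2 * (Real.log t ^ 2)⁻¹ = 1 := mul_inv_cancel₀ hsq.ne'
    rw [hL2]
    nlinarith [inv_pos.mpr hsq]
  have htv : 0 < t + v t := by linarith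
  have hden_pos : 0 < (t + v t) ^ 2 := pow_pos htv 2
  have hden_le : (t + v t) ^ 2 ≤ 4 * L ^ 2 := by nlinarith
  have hnum_ge : L - 8 * L ^ 2 ≤ -2 * (3 * t ^ 2 * u t ^ 2 - 2 * v t + t) := by nlinarith
  have hnum0 : 0 ≤ L - 8 * L ^ 2 := by nlinarith
  have hfge : (L - 8 * L ^ 2) / (4 * L ^ 2) ≤ f t := by
    unfold f
    calc (L - 8 * L ^ 2) / (4 * L ^ 2) ≤ (L - 8 * L ^ 2) / (t + v t) ^ 2 := by
          apply div_le_div_of_nonneg_left hnum0 hden_pos hden_le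
    _ ≤ -2 * (3 * t ^ 2 * u t ^ 2 - 2 * v t + t) / (t + v t) ^ 2 := by
          gcongr
  refine le_trans (le_of_eq ?_) hfge
  have hlog_eq : Real.log t = -L⁻¹ := by rw [hL, inv_neg, inv_inv, neg_neg]
  rw [hlog_eq]
  field_simp
  ring

theorem f_tendsto_atTop_at_zero :
    Filter.Tendsto f (nhdsWithin 0 (Set.Ioi 0)) Filter.atTop := by
  have hlog : Tendsto Real.log (nhdsWithin 0 (Set.Ioi 0)) atBot :=
    Real.tendsto_log_nhdsGT_zero
  have h1 : Tendsto (fun t => -Real.log t / 4 - 2) (nhdsWithin 0 (Set.Ioi 0)) atTop := by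
    have h2 : Tendsto (fun t => -Real.log t) (nhdsWithin 0 (Set.Ioi 0)) atTop :=
      tendsto_neg_atBot_iff.mp (by simpa using hlog)
    have h3 := h2.atTop_div_const (show (0:ℝ) < 4 by norm_num)
    simpa [sub_eq_add_neg] using tendsto_atTop_add_const_right _ (-2) h3
  apply tendsto_atTop_mono' _ _ h1
  filter_upwards [Ioc_mem_nhdsGT_of_mem (Set.mem_Ico.mpr ⟨le_refl 0, Real.exp_pos _⟩)]
    with t ht
  exact f_lower ht.1 ht.2
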